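/- Let l_n > 0, 0 < ρ_1 ≤ ρ_2, K ∈ ℝ^n, and P a symmetric positive definite n×n real matrix such that for every ρ ∈ [ρ_1, ρ_2] the matrix (J_n − ρ l_n e_n Kᵀ)ᵀ P + P (J_n − ρ l_n e_n Kᵀ) + Id_n is negative semidefinite. Define V_0(x) = (xᵀ P x)^{1/2}. Then there exist positive constants c_0 and l_0 such that for every x ∈ ℝ^n ∖ {0}, every ρ ∈ [ρ_1, ρ_2], and every d ∈ ℝ: ∇V_0(x)·((J_n − ρ l_n e_n Kᵀ) x + e_n d) ≤ −c_0 V_0(x) + l_0 |d|. -/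

import Mathlib

open MeasureTheory Filter Matrix

noncomputable section

/-- The signed power `⌊x⌉^a = |x|^a · sign x`. -/
def sgnPow (x a : ℝ) : ℝ := |x| ^ a * Real.sign x

/-- The exponents `p_i = 1 - (i-1)/n`. -/
def pe (n i : ℕ) : ℝ := 1 - ((i : ℝ) - 1) / n

/-- The exponents `β_0 = p_2`, `β_i = (n-1+i)/(n-i)`. -/
def be (n i : ℕ) : ℝ := if i = 0 then pe n 2 else ((n : ℝ) - 1 + i) / ((n : ℝ) - i)

/-- The exponent `α = 2(n-1)/(2n-1)`. -/
def al (n : ℕ) : ℝ := 2 * ((n : ℝ) - 1) / (2 * (n : ℝ) - 1)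

/-- The recursively defined virtual controls `v_i`; states are 1-indexed sequences
(the 0-th coordinate is unused). -/
def vfb (n : ℕ) (l : ℕ → ℝ) : ℕ → (ℕ → ℝ) → ℝ
  | 0, _ => 0
  | i + 1, x =>
    -l (i + 1) *
      sgnPow (sgnPow (x (i + 1)) (be n i) - sgnPow (vfb n l i x) (be n i))
        (pe n (i + 2) / (pe n (i + 1) * be n i))

/-- `ω_i(x_1,…,x_i) = ⌊x_i⌉^{β_{i-1}} - ⌊v_{i-1}⌉^{β_{i-1}}`. -/
def omfb (n : ℕ) (l : ℕ → ℝ) (i : ℕ) (x : ℕ → ℝ) : ℝ :=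
  sgnPow (x i) (be n (i - 1)) - sgnPow (vfb n l (i - 1) x) (be n (i - 1))

/-- `W_i`. -/
def Wfb (n : ℕ) (l : ℕ → ℝ) (i : ℕ) (x : ℕ → ℝ) : ℝ :=
  (|x i| ^ (be n (i - 1) + 1) - |vfb n l (i - 1) x| ^ (be n (i - 1) + 1)) / (be n (i - 1) + 1) -
    sgnPow (vfb n l (i - 1) x) (be n (i - 1)) * (x i - vfb n l (i - 1) x)

/-- Embedding of `ℝ^n` into 1-indexed sequences. -/
def emb (n : ℕ) (x : Fin n → ℝ) (j : ℕ) : ℝ :=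
  if h : 1 ≤ j ∧ j ≤ n then x ⟨j - 1, by omega⟩ else 0

/-- The Lyapunov function `V_n = Σ_{i=1}^n W_i` on `ℝ^n`. -/
def Vn (n : ℕ) (l : ℕ → ℝ) (x : Fin n → ℝ) : ℝ :=
  ∑ i ∈ Finset.Icc 1 n, Wfb n l i (emb n x)

/-- `ω_n` on `ℝ^n`. -/
def omn (n : ℕ) (l : ℕ → ℝ) (x : Fin n → ℝ) : ℝ := omfb n l n (emb n x)

/-- The `n`-th Jordan block: `(J_n)_{ij} = 1` if `i = j - 1` (1-indexed), else `0`. -/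
def Jmat (n : ℕ) : Matrix (Fin n) (Fin n) ℝ :=
  Matrix.of fun i j => if (i : ℕ) + 1 = (j : ℕ) then 1 else 0

/-- The `i`-th standard basis vector of `ℝ^n` (1-indexed: `eVec n n = e_n`). -/
def eVec (n i : ℕ) : Fin n → ℝ := fun j => if (j : ℕ) + 1 = i then 1 else 0

/-- The bilinear form `(u,v) ↦ u ⬝ᵥ P *ᵥ v` as a continuous bilinear map. -/
def qB (P : Matrix (Fin n) (Fin n) ℝ) : (Fin n → ℝ) →L[ℝ] (Fin n → ℝ) →L[ℝ] ℝ :=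
  LinearMap.toContinuousLinearMap
  { toFun := fun u => LinearMap.toContinuousLinearMap
      { toFun := fun v => u ⬝ᵥ P *ᵥ v
        map_add' := fun a b => by simp [mulVec_add, dotProduct_add]
        map_smul' := fun c a => by simp [mulVec_smul, dotProduct_smul] }
    map_add' := fun a b => by ext v; simp [add_dotProduct]
    map_smul' := fun c a => by ext v; simp [smul_dotProduct] }

@[simp] lemma qB_apply (P : Matrix (Fin n) (Fin n) ℝ) (u v : Fin n → ℝ) :
    qB P u v = u ⬝ᵥ P *ᵥ v := rfl

lemma symm_dot {P : Matrix (Fin n) (Fin n) ℝ} (hP : P.IsSymm) (u v : Fin n → ℝ) :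
    u ⬝ᵥ P *ᵥ v = v ⬝ᵥ P *ᵥ u := by
  rw [dotProduct_mulVec, ← mulVec_transpose, hP.eq, dotProduct_comm]

lemma hasFDerivAt_quad (P : Matrix (Fin n) (Fin n) ℝ) (hP : P.IsSymm) (x : Fin n → ℝ) :
    HasFDerivAt (fun y : Fin n → ℝ => y ⬝ᵥ P *ᵥ y)
      ((2 : ℝ) • (qB P x)) x := by
  have h := (qB P).hasFDerivAt_of_bilinear (hasFDerivAt_id x) (hasFDerivAt_id x)
  refine HasFDerivAt.congr_fderiv h ?_
  ext v
  simp [ContinuousLinearMap.precompR, ContinuousLinearMap.precompL, two_smul,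
    symm_dot hP v x]

lemma cs_psd {P : Matrix (Fin n) (Fin n) ℝ} (hP : P.PosSemidef) (hS : P.IsSymm)
    (u v : Fin n → ℝ) :
    (u ⬝ᵥ P *ᵥ v) ^ 2 ≤ (u ⬝ᵥ P *ᵥ u) * (v ⬝ᵥ P *ᵥ v) := by
  have key : ∀ t : ℝ, 0 ≤ (v ⬝ᵥ P *ᵥ v) * (t * t) + (2 * (u ⬝ᵥ P *ᵥ v)) * t +
      (u ⬝ᵥ P *ᵥ u) := by
    intro t
    have h0 := hP.dotProduct_mulVec_nonneg (u + t • v)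
    have hst : star (u + t • v) = u + t • v := by
      funext i; simp
    rw [hst] at h0
    have hexp : (u + t • v) ⬝ᵥ P *ᵥ (u + t • v) =
        (v ⬝ᵥ P *ᵥ v) * (t * t) + (2 * (u ⬝ᵥ P *ᵥ v)) * t + (u ⬝ᵥ P *ᵥ u) := by
      rw [mulVec_add, mulVec_smul, dotProduct_add, add_dotProduct, add_dotProduct,
        smul_dotProduct, dotProduct_smul, smul_dotProduct, dotProduct_smul,
        symm_dot hS v u]
      ring_nf
    rw [hexp] at h0
    exact h0
  have hd := discrim_le_zero key
  unfold discrim at hd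
  nlinarith [hd]

lemma quad_upper (P : Matrix (Fin n) (Fin n) ℝ) (x : Fin n → ℝ) :
    x ⬝ᵥ P *ᵥ x ≤ ((∑ i, ∑ j, |P i j|) + 1) * (x ⬝ᵥ x) := by
  have hS : 0 ≤ x ⬝ᵥ x := by
    simp only [dotProduct]
    exact Finset.sum_nonneg fun i _ => mul_self_nonneg _
  have hx2 : ∀ i, x i * x i ≤ x ⬝ᵥ x := by
    intro i
    simpa [dotProduct] using
      Finset.single_le_sum (f := fun k => x k * x k)
        (fun k _ => mul_self_nonneg (x k)) (Finset.mem_univ i)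
  have step : x ⬝ᵥ P *ᵥ x ≤ (∑ i, ∑ j, |P i j|) * (x ⬝ᵥ x) := by
    have hrw : x ⬝ᵥ P *ᵥ x = ∑ i, ∑ j, x i * (P i j * x j) := by
      simp [dotProduct, mulVec, Finset.mul_sum]
    rw [hrw]
    calc ∑ i, ∑ j, x i * (P i j * x j)
        ≤ ∑ i, ∑ j, |P i j| * (x ⬝ᵥ x) := by
          apply Finset.sum_le_sum; intro i _
          apply Finset.sum_le_sum; intro j _
          have h1 : x i * (P i j * x j) ≤ |P i j| * |x i * x j| := by
            calc x i * (P i j * x j) ≤ |x i * (P i j * x j)| := le_abs_self _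
              _ = |P i j| * |x i * x j| := by rw [abs_mul, abs_mul, abs_mul]; ring
          refine h1.trans (mul_le_mul_of_nonneg_left ?_ (abs_nonneg _))
          have hi := hx2 i; have hj := hx2 j
          rw [abs_mul]
          nlinarith [sq_nonneg (|x i| - |x j|), abs_nonneg (x i), abs_nonneg (x j),
            abs_mul_abs_self (x i), abs_mul_abs_self (x j)]
      _ = (∑ i, ∑ j, |P i j|) * (x ⬝ᵥ x) := by
          rw [Finset.sum_mul]
          exact Finset.sum_congr rfl fun i _ => (Finset.sum_mul _ _ _).symm
  nlinarith [step, hS]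

set_option maxHeartbeats 1000000 in
/-- given `l_n > 0`, `0 < ρ₁ ≤ ρ₂`, `K ∈ ℝ^n` and a symmetric positive
definite `P` making `(J_n - ρ l_n e_n Kᵀ)ᵀP + P(J_n - ρ l_n e_n Kᵀ) + Id` negative
semidefinite for all `ρ ∈ [ρ₁, ρ₂]`, with `V₀(x) = (xᵀPx)^{1/2}` there exist
`c₀, l₀ > 0` such that for `x ≠ 0`, `ρ ∈ [ρ₁, ρ₂]`, `d ∈ ℝ`,
`∇V₀(x)·((J_n - ρ l_n e_n Kᵀ)x + e_n d) ≤ -c₀ V₀(x) + l₀ |d|`. -/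
theorem quadratic_ISS_inequality (n : ℕ) (hn : 0 < n)
    (L : ℝ) (hL : 0 < L) (ρ₁ ρ₂ : ℝ) (hρ₁ : 0 < ρ₁) (hρ : ρ₁ ≤ ρ₂)
    (K : Fin n → ℝ) (P : Matrix (Fin n) (Fin n) ℝ)
    (hPsymm : P.IsSymm) (hPpos : P.PosDef)
    (hlyap : ∀ ρ ∈ Set.Icc ρ₁ ρ₂,
      (-((Jmat n - (ρ * L) • vecMulVec (eVec n n) K)ᵀ * P +
          P * (Jmat n - (ρ * L) • vecMulVec (eVec n n) K) + 1)).PosSemidef) :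
    ∃ c₀ l₀ : ℝ, 0 < c₀ ∧ 0 < l₀ ∧
      ∀ x : Fin n → ℝ, x ≠ 0 → ∀ ρ ∈ Set.Icc ρ₁ ρ₂, ∀ d : ℝ,
        fderiv ℝ (fun y : Fin n → ℝ => Real.sqrt (y ⬝ᵥ (P *ᵥ y))) x
            ((Jmat n - (ρ * L) • vecMulVec (eVec n n) K) *ᵥ x + d • eVec n n) ≤
          -c₀ * Real.sqrt (x ⬝ᵥ (P *ᵥ x)) + l₀ * |d| := by
  have hPsd := hPpos.posSemidef
  set M : ℝ := (∑ i, ∑ j, |P i j|) + 1 with hMdef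
  have hMpos : 0 < M := by positivity
  set e : Fin n → ℝ := eVec n n with hedef
  set q : ℝ := e ⬝ᵥ P *ᵥ e with hqdef
  have hq0 : 0 ≤ q := by
    have h := hPsd.dotProduct_mulVec_nonneg e
    have hst : star e = e := by funext i; simp
    rwa [hst] at h
  refine ⟨1 / (2 * M), Real.sqrt q + 1, by positivity, by positivity, ?_⟩
  intro x hx ρ hρm d
  have ht : 0 < x ⬝ᵥ P *ᵥ x := by
    have h := hPpos.dotProduct_mulVec_pos hx
    have hst : star x = x := by funext i; simp
    rwa [hst] at h
  set t : ℝ := x ⬝ᵥ P *ᵥ x with htdef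
  set s : ℝ := Real.sqrt t with hsdef
  have hs : 0 < s := Real.sqrt_pos.mpr ht
  set A : Matrix (Fin n) (Fin n) ℝ := Jmat n - (ρ * L) • vecMulVec (eVec n n) K with hAdef
  set u : Fin n → ℝ := A *ᵥ x + d • eVec n n with hudef
  -- fderiv computation
  have hquad := hasFDerivAt_quad P hPsymm x
  have hderiv := hquad.sqrt (ne_of_gt ht)
  have hfd := hderiv.fderiv
  have happ : fderiv ℝ (fun y : Fin n → ℝ => Real.sqrt (y ⬝ᵥ (P *ᵥ y))) x u
      = (x ⬝ᵥ P *ᵥ u) / s := by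
    rw [hfd]
    simp only [ContinuousLinearMap.smul_apply, qB_apply, smul_eq_mul]
    field_simp
    have hsq : √(x ⬝ᵥ P *ᵥ x) = s := rfl
    rw [hsq, mul_div_cancel_right₀ _ hs.ne']
  rw [happ]
  -- Lyapunov bound
  have hlyap' := (hlyap ρ hρm).dotProduct_mulVec_nonneg x
  have hst : star x = x := by funext i; simp
  rw [hst] at hlyap'
  have hexp : x ⬝ᵥ (-(Aᵀ * P + P * A + 1)) *ᵥ x
      = -(2 * (x ⬝ᵥ P *ᵥ (A *ᵥ x)) + x ⬝ᵥ x) := by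
    rw [neg_mulVec, dotProduct_neg, add_mulVec, add_mulVec, one_mulVec,
      ← mulVec_mulVec, ← mulVec_mulVec, dotProduct_add, dotProduct_add,
      dotProduct_mulVec x Aᵀ, vecMul_transpose, symm_dot hPsymm (A *ᵥ x) x]
    ring
  rw [hexp] at hlyap'
  have hkey : 2 * (x ⬝ᵥ P *ᵥ (A *ᵥ x)) + x ⬝ᵥ x ≤ 0 := by linarith
  have hxx : t ≤ M * (x ⬝ᵥ x) := quad_upper P x
  have h1 : x ⬝ᵥ P *ᵥ (A *ᵥ x) ≤ -(t / (2 * M)) := by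
    have : x ⬝ᵥ P *ᵥ (A *ᵥ x) ≤ -(x ⬝ᵥ x) / 2 := by linarith
    have h2 : t / M ≤ x ⬝ᵥ x := (div_le_iff₀ hMpos).mpr (by linarith [hxx])
    calc x ⬝ᵥ P *ᵥ (A *ᵥ x) ≤ -(x ⬝ᵥ x) / 2 := this
      _ ≤ -(t / (2 * M)) := by
          rw [neg_div, neg_le_neg_iff, div_le_div_iff₀ (by positivity) (by norm_num)]
          nlinarith [h2]
  -- Cauchy-Schwarz bound on the disturbance term
  have hcs : |x ⬝ᵥ P *ᵥ e| ≤ s * Real.sqrt q := by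
    have h := cs_psd hPsd hPsymm x e
    have : |x ⬝ᵥ P *ᵥ e| = Real.sqrt ((x ⬝ᵥ P *ᵥ e) ^ 2) := (Real.sqrt_sq_eq_abs _).symm
    rw [this]
    calc Real.sqrt ((x ⬝ᵥ P *ᵥ e) ^ 2) ≤ Real.sqrt (t * q) := Real.sqrt_le_sqrt h
      _ = s * Real.sqrt q := Real.sqrt_mul ht.le q
  have hsplit : x ⬝ᵥ P *ᵥ u = x ⬝ᵥ P *ᵥ (A *ᵥ x) + d * (x ⬝ᵥ P *ᵥ e) := by
    rw [hudef, mulVec_add, mulVec_smul, dotProduct_add, dotProduct_smul, smul_eq_mul, hedef]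
  have hup : x ⬝ᵥ P *ᵥ u ≤ -(t / (2 * M)) + |d| * (s * Real.sqrt q) := by
    rw [hsplit]
    have : d * (x ⬝ᵥ P *ᵥ e) ≤ |d| * (s * Real.sqrt q) := by
      calc d * (x ⬝ᵥ P *ᵥ e) ≤ |d * (x ⬝ᵥ P *ᵥ e)| := le_abs_self _
        _ = |d| * |x ⬝ᵥ P *ᵥ e| := abs_mul _ _
        _ ≤ |d| * (s * Real.sqrt q) := mul_le_mul_of_nonneg_left hcs (abs_nonneg d)
    linarith
  have hss : s * s = t := Real.mul_self_sqrt ht.le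
  calc (x ⬝ᵥ P *ᵥ u) / s ≤ (-(t / (2 * M)) + |d| * (s * Real.sqrt q)) / s := by
        gcongr
    _ = -(1 / (2 * M)) * s + Real.sqrt q * |d| := by
        rw [← hss]; field_simp
    _ ≤ -(1 / (2 * M)) * s + (Real.sqrt q + 1) * |d| := by
        nlinarith [abs_nonneg d]
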